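/- At any partially-separating PBE of the epistemic signaling game, the sender's equilibrium strategy σ^s* satisfies γ^r(σ^s*, m₀, θ₀^r) < 0 and γ^r(σ^s*, m₁, θ₁^r) > 0. More precisely: if a strategy profile (σ^s*, σ^r*) satisfies the mutual best-response conditions, σ^s* is neither separating nor pooling, γ^s(σ^r*) = C' with C' ∈ (0,1), and the structural conditions of Lemmas 2–3 hold (monotonicity γ^r(·,m,θ₀^r) < γ^r(·,m,θ₁^r) on on-path messages, and the sign conditions γ^r(σ,m₀,θ₀^r)+γ^r(σ,m₁,θ₀^r) < 0 < γ^r(σ,m₀,θ₁^r)+γ^r(σ,m₁,θ₁^r)), then assuming γ^r(σ^s*,m₀,θ₀^r) ≥ 0 forces γ^s(σ^r*) ≤ 0, a contradiction with γ^s(σ^r*) = C' > 0. -/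
import Mathlib

/-- at any partially-separating PBE the sender's strategy satisfies
γ^r(σ^s*,m₀,θ₀^r) < 0 and γ^r(σ^s*,m₁,θ₁^r) > 0.
Here `sθ = σ^s*(m₀|θ^s)` (so σ^s*(m₁|θ^s) = 1 − sθ), `pij = π^r(θᵢ^s|θⱼ^r)`,
`rmθ = σ^r*(a₁|m,θ^r)`, `gmθ = γ^r(σ^s*,m,θ^r)`, with on-path best responses,
partial separation, sender indifference γ^s(σ^r*) = C' ∈ (0,1), monotonicity in
the receiver type, and the prior-preference sign conditions. -/
theorem stmt_7
    (p00 p10 p01 p11 Δ0 Δ1 πs0 πs1 C' : ℝ)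
    (s0 s1 r00 r01 r10 r11 g00 g01 g10 g11 : ℝ)
    (hΔ0 : Δ0 < 0) (hΔ1 : 0 < Δ1)
    (hπ0 : 0 ≤ πs0) (hπ1 : 0 ≤ πs1) (hπ : πs0 + πs1 = 1)
    (hC'0 : 0 < C') (hC'1 : C' < 1)
    (hs0 : 0 ≤ s0) (hs0' : s0 ≤ 1) (hs1 : 0 ≤ s1) (hs1' : s1 ≤ 1)
    (hr00 : 0 ≤ r00) (hr00' : r00 ≤ 1) (hr01 : 0 ≤ r01) (hr01' : r01 ≤ 1)
    (hr10 : 0 ≤ r10) (hr10' : r10 ≤ 1) (hr11 : 0 ≤ r11) (hr11' : r11 ≤ 1)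
    -- definitions of γ^r(σ^s*, m, θ^r)
    (hg00 : g00 = s0 * p00 * Δ0 + s1 * p10 * Δ1)
    (hg01 : g01 = s0 * p01 * Δ0 + s1 * p11 * Δ1)
    (hg10 : g10 = (1 - s0) * p00 * Δ0 + (1 - s1) * p10 * Δ1)
    (hg11 : g11 = (1 - s0) * p01 * Δ0 + (1 - s1) * p11 * Δ1)
    -- receiver best responses after (on-path) messages
    (hbr00n : g00 < 0 → r00 = 0) (hbr00p : 0 < g00 → r00 = 1)
    (hbr01n : g01 < 0 → r01 = 0) (hbr01p : 0 < g01 → r01 = 1)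
    (hbr10n : g10 < 0 → r10 = 0) (hbr10p : 0 < g10 → r10 = 1)
    (hbr11n : g11 < 0 → r11 = 0) (hbr11p : 0 < g11 → r11 = 1)
    -- partially separating: some message is sent with interior probability
    (hps : (0 < s0 ∧ s0 < 1) ∨ (0 < s1 ∧ s1 < 1))
    -- sender indifference γ^s(σ^r*) = C'
    (hind : (r10 - r00) * πs0 + (r11 - r01) * πs1 = C')
    -- monotonicity in receiver type (Lemma 2, eq. (6))
    (hmono0 : g00 < g01) (hmono1 : g10 < g11)
    -- prior-preference sign conditions (Lemma 2, eq. (7))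
    (hsgn0 : g00 + g10 < 0) (hsgn1 : g01 + g11 > 0) :
    g00 < 0 ∧ 0 < g11 := by
  constructor
  · by_contra h
    push_neg at h
    have h01 : r01 = 1 := hbr01p (lt_of_le_of_lt h hmono0)
    have h10 : r10 = 0 := hbr10n (by linarith)
    rw [h01, h10] at hind
    nlinarith [mul_nonneg hr00 hπ0, mul_nonneg (sub_nonneg.2 hr11') hπ1]
  · by_contra h
    push_neg at h
    have h10 : r10 = 0 := hbr10n (lt_of_lt_of_le hmono1 h)
    have h01 : r01 = 1 := hbr01p (by linarith)
    rw [h01, h10] at hind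
    nlinarith [mul_nonneg hr00 hπ0, mul_nonneg (sub_nonneg.2 hr11') hπ1]
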